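/- Let F(x) = 2x mod 1 on 𝕋¹ and let the noise be given by ĝ(ξ) = e^{−|ξ|^α} for some α ∈ (0,2]. Then for every n ≥ 1, the noisy propagator T_ε = G_ε U_F on L²₀(𝕋¹) satisfies ‖T_ε^n‖ = exp(−ε^α (2^{nα} − 1)/(1 − 2^{−α})), and the coarse-grained propagator satisfies ‖G_ε U_F^n G_ε‖ = exp(−ε^α (2^{nα} + 1)). Consequently both dissipation times equal (1/ln 2)·ln(1/ε) + O(1) as ε → 0. -/

import Mathlib

open Filter Asymptotics
open scoped Topology

noncomputable section

/-- Nonzero integer frequencies. -/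
abbrev NZ1 := {k : ℤ // k ≠ 0}

/-- Model of `L²₀(𝕋¹)` via Fourier coefficients on nonzero frequencies; the Fourier
mode `e_k` is `lp.single 2 k 1`. -/
abbrev H1 := lp (fun _ : NZ1 => ℂ) 2

open scoped ENNReal

namespace Stmt18Aux

lemma ptwo : (0:ℝ) < (2 : ℝ≥0∞).toReal := by norm_num

/-- coordinate evaluation as a CLM -/
def eval (m : NZ1) : H1 →L[ℂ] ℂ :=
  LinearMap.mkContinuous
    { toFun := fun f => f m
      map_add' := fun f g => congrFun (lp.coeFn_add f g) m
      map_smul' := fun c f => congrFun (lp.coeFn_smul c f) m }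
    1 (fun f => by simpa using lp.norm_apply_le_norm (by norm_num) f m)

@[simp] lemma eval_apply (m : NZ1) (f : H1) : eval m f = f m := rfl

lemma single_coe (k : NZ1) (c : ℂ) (m : NZ1) :
    (lp.single 2 k c : ∀ _ : NZ1, ℂ) m = if m = k then c else 0 := by
  by_cases h : m = k
  · subst h; simp [lp.single_apply_self]
  · simp [lp.single_apply_ne _ _ _ h, h]

/-- Operator norm of a weighted shift along an injective map. -/
lemma opNorm_eq (A : H1 →L[ℂ] H1) (σ : NZ1 → NZ1) (hσ : Function.Injective σ)
    (w : NZ1 → ℝ) (W : ℝ) (hw0 : ∀ k, 0 ≤ w k) (hwW : ∀ k, w k ≤ W)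
    (k₀ : NZ1) (hk₀ : w k₀ = W)
    (hA : ∀ (k : NZ1) (c : ℂ), A (lp.single 2 k c) = lp.single 2 (σ k) ((w k : ℂ) * c)) :
    ‖A‖ = W := by
  have hW0 : 0 ≤ W := hk₀ ▸ hw0 k₀
  have hsum : ∀ f : H1, HasSum (fun k => lp.single 2 (σ k) ((w k : ℂ) * (f k : ℂ))) (A f) := by
    intro f
    have h := (lp.hasSum_single (by norm_num) f).mapL A
    simpa only [hA] using h
  have hcsum : ∀ (f : H1) (m : NZ1),
      HasSum (fun k => if m = σ k then (w k : ℂ) * f k else 0) ((A f : ∀ _ : NZ1, ℂ) m) := by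
    intro f m
    have h := ((eval m).hasSum (hsum f))
    simpa only [eval_apply, single_coe] using h
  have hcoeff1 : ∀ (f : H1) (k : NZ1), (A f : ∀ _ : NZ1, ℂ) (σ k) = (w k : ℂ) * f k := by
    intro f k
    refine (hcsum f (σ k)).unique ?_
    have h2 : HasSum (fun k' => if k' = k then (w k : ℂ) * f k else 0) ((w k : ℂ) * f k) :=
      hasSum_ite_eq _ _
    convert h2 using 2 with k'
    by_cases hk : k' = k
    · subst hk; simp
    · have : ¬ (σ k = σ k') := fun hh => hk (hσ hh.symm)
      simp [this, hk]
  have hcoeff0 : ∀ (f : H1) (m : NZ1), m ∉ Set.range σ → (A f : ∀ _ : NZ1, ℂ) m = 0 := by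
    intro f m hm
    refine (hcsum f m).unique ?_
    have : (fun k => if m = σ k then (w k : ℂ) * f k else 0) = fun _ => (0:ℂ) := by
      funext k
      have : ¬ (m = σ k) := fun hh => hm ⟨k, hh.symm⟩
      simp [this]
    rw [this]; exact hasSum_zero
  set t := (2 : ℝ≥0∞).toReal with ht
  have hub : ∀ f : H1, ‖A f‖ ≤ W * ‖f‖ := by
    intro f
    have hnormA := lp.hasSum_norm ptwo (A f)
    have hnormf := lp.hasSum_norm ptwo f
    have hsupp : ∀ m ∉ Set.range σ, ‖(A f : ∀ _ : NZ1, ℂ) m‖ ^ t = 0 := by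
      intro m hm
      rw [hcoeff0 f m hm]
      rw [norm_zero]; exact Real.zero_rpow ptwo.ne'
    have hA2 : HasSum (fun k => ‖(A f : ∀ _ : NZ1, ℂ) (σ k)‖ ^ t) (‖A f‖ ^ t) :=
      (Function.Injective.hasSum_iff hσ hsupp).2 hnormA
    have hA3 : HasSum (fun k => (w k * ‖(f : ∀ _ : NZ1, ℂ) k‖) ^ t) (‖A f‖ ^ t) := by
      convert hA2 using 2 with k
      rw [hcoeff1, norm_mul, Complex.norm_real, Real.norm_eq_abs, abs_of_nonneg (hw0 k)]
    have hle : ‖A f‖ ^ t ≤ W ^ t * ‖f‖ ^ t := by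
      refine hasSum_le ?_ hA3 (hnormf.mul_left (W ^ t))
      intro k
      calc (w k * ‖(f : ∀ _ : NZ1, ℂ) k‖) ^ t
          ≤ (W * ‖(f : ∀ _ : NZ1, ℂ) k‖) ^ t := by
            exact Real.rpow_le_rpow (mul_nonneg (hw0 k) (norm_nonneg _))
              (mul_le_mul_of_nonneg_right (hwW k) (norm_nonneg _)) ptwo.le
        _ = W ^ t * ‖(f : ∀ _ : NZ1, ℂ) k‖ ^ t := Real.mul_rpow hW0 (norm_nonneg _)
    rw [← Real.mul_rpow hW0 (norm_nonneg _)] at hle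
    exact (Real.rpow_le_rpow_iff (norm_nonneg _) (mul_nonneg hW0 (norm_nonneg _)) ptwo).1 hle
  refine le_antisymm (A.opNorm_le_bound hW0 hub) ?_
  have h1 : A (lp.single 2 k₀ 1) = lp.single 2 (σ k₀) ((W : ℂ)) := by
    rw [hA, hk₀, mul_one]
  have h2 : ‖A (lp.single 2 k₀ 1)‖ = W := by
    rw [h1]
    have := lp.norm_single (E := fun _ : NZ1 => ℂ) (p := 2) (by norm_num) (σ k₀) (W : ℂ)
    rw [this, Complex.norm_real, Real.norm_eq_abs, abs_of_nonneg hW0]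
  have h3 : ‖(lp.single 2 k₀ (1:ℂ) : H1)‖ = 1 := by
    have := lp.norm_single (E := fun _ : NZ1 => ℂ) (p := 2) (by norm_num) k₀ (1 : ℂ)
    rw [this, norm_one]
  calc W = ‖A (lp.single 2 k₀ 1)‖ := h2.symm
    _ ≤ ‖A‖ * ‖(lp.single 2 k₀ (1:ℂ) : H1)‖ := A.le_opNorm _
    _ = ‖A‖ := by rw [h3, mul_one]

lemma sInf_bound {a : ℝ} (ha : 0 < a) (D : ℝ) (hD : 1 < D)
    {S : Set ℕ} (hS : ∀ n, n ∈ S ↔ D < (2:ℝ) ^ ((n:ℝ) * a)) :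
    Real.log D / (a * Real.log 2) < ((sInf S : ℕ) : ℝ) ∧
      ((sInf S : ℕ) : ℝ) ≤ Real.log D / (a * Real.log 2) + 1 := by
  set N := Real.log D / (a * Real.log 2) with hN
  have hl2 : (0:ℝ) < Real.log 2 := Real.log_pos (by norm_num)
  have hal2 : (0:ℝ) < a * Real.log 2 := mul_pos ha hl2
  have hmem : ∀ n : ℕ, n ∈ S ↔ N < (n : ℝ) := by
    intro n
    rw [hS, Real.lt_rpow_iff_log_lt (lt_trans one_pos hD) (by norm_num), hN,
      div_lt_iff₀ hal2]
    constructor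
    · intro h; nlinarith
    · intro h; nlinarith
  have hne : S.Nonempty := by
    refine ⟨Nat.floor N + 1, (hmem _).2 ?_⟩
    push_cast
    exact Nat.lt_floor_add_one N
  constructor
  · exact (hmem _).1 (Nat.sInf_mem hne)
  · have h1 : sInf S ≤ Nat.floor N + 1 :=
      Nat.sInf_le ((hmem _).2 (by push_cast; exact Nat.lt_floor_add_one N))
    have h2 : ((Nat.floor N : ℕ) : ℝ) ≤ N := by
      have hN0 : 0 ≤ N := le_of_lt (div_pos (Real.log_pos hD) hal2)
      exact Nat.floor_le hN0
    calc ((sInf S : ℕ) : ℝ) ≤ ((Nat.floor N + 1 : ℕ) : ℝ) := by exact_mod_cast h1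
      _ ≤ N + 1 := by push_cast; linarith

lemma tau_diff_bound {α : ℝ} (hα : 0 < α) {ε : ℝ} (hε : 0 < ε) {S : Set ℕ} {y B : ℝ}
    (hy0 : 0 < y) (hD : ε ^ α < y)
    (hchar : ∀ n, n ∈ S ↔ y / ε ^ α < (2:ℝ) ^ ((n:ℝ) * α))
    (hyb : |Real.log y| ≤ B) :
    |((sInf S : ℕ) : ℝ) - Real.log (1/ε) / Real.log 2| ≤ 1 + B / (α * Real.log 2) := by
  have hεα : 0 < ε ^ α := Real.rpow_pos_of_pos hε α
  have hD1 : 1 < y / ε ^ α := (one_lt_div hεα).2 hD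
  obtain ⟨hlo, hhi⟩ := sInf_bound hα _ hD1 hchar
  have hl2 : (0:ℝ) < Real.log 2 := Real.log_pos (by norm_num)
  have hal2 : (0:ℝ) < α * Real.log 2 := mul_pos hα hl2
  set N := Real.log (y / ε ^ α) / (α * Real.log 2) with hNdef
  set L := Real.log (1/ε) / Real.log 2 with hLdef
  have hNL : N - L = Real.log y / (α * Real.log 2) := by
    have h1 : Real.log (y / ε ^ α) = Real.log y - α * Real.log ε := by
      rw [Real.log_div hy0.ne' hεα.ne', Real.log_rpow hε]
    have h2 : Real.log (1/ε) = -Real.log ε := by rw [one_div, Real.log_inv]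
    rw [hNdef, hLdef, h1, h2]
    field_simp
    ring
  have h3 : |N - L| ≤ B / (α * Real.log 2) := by
    rw [hNL, abs_div, abs_of_pos hal2]
    gcongr
  have h4 : |((sInf S : ℕ) : ℝ) - N| ≤ 1 := abs_le.2 ⟨by linarith, by linarith⟩
  calc |((sInf S : ℕ) : ℝ) - L| = |(((sInf S : ℕ) : ℝ) - N) + (N - L)| := by
        rw [sub_add_sub_cancel]
    _ ≤ |((sInf S : ℕ) : ℝ) - N| + |N - L| := abs_add_le _ _
    _ ≤ 1 + B / (α * Real.log 2) := add_le_add h4 h3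

def mulp (n : ℕ) (k : NZ1) : NZ1 :=
  ⟨2 ^ n * k.1, mul_ne_zero (pow_ne_zero n two_ne_zero) k.2⟩

lemma mulp_injective (n : ℕ) : Function.Injective (mulp n) := by
  intro a b h
  have h2 := congrArg Subtype.val h
  simp only [mulp] at h2
  exact Subtype.ext (mul_left_cancel₀ (pow_ne_zero n two_ne_zero) h2)

variable {α ε : ℝ}

lemma term_eq (hε : 0 < ε) (j : ℕ) (k : ℤ) :
    |ε * ((2 ^ j * k : ℤ) : ℝ)| ^ α = ((2:ℝ) ^ α) ^ j * (ε ^ α * |(k : ℝ)| ^ α) := by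
  have h1 : |ε * ((2 ^ j * k : ℤ) : ℝ)| = (2:ℝ) ^ j * (ε * |(k : ℝ)|) := by
    push_cast
    rw [abs_mul, abs_mul, abs_of_pos hε, abs_pow, abs_two]
    ring
  rw [h1, Real.mul_rpow (by positivity) (by positivity),
    Real.mul_rpow hε.le (abs_nonneg _)]
  congr 1
  rw [← Real.rpow_natCast (2:ℝ) j, ← Real.rpow_natCast ((2:ℝ)^α) j,
    ← Real.rpow_mul (by norm_num), ← Real.rpow_mul (by norm_num), mul_comm]

lemma term0_eq (hε : 0 < ε) (k : ℤ) : |ε * (k : ℝ)| ^ α = ε ^ α * |(k : ℝ)| ^ α := by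
  have := term_eq (α := α) hε 0 k
  simpa using this

def SN (α : ℝ) (n : ℕ) : ℝ := ∑ j ∈ Finset.range n, ((2:ℝ) ^ α) ^ (j + 1)

lemma SN_nonneg (n : ℕ) : 0 ≤ SN α n := by
  apply Finset.sum_nonneg
  intro j _
  positivity

lemma rpow_pow (n : ℕ) : ((2:ℝ) ^ α) ^ n = (2:ℝ) ^ ((n:ℝ) * α) := by
  rw [← Real.rpow_natCast ((2:ℝ)^α) n, ← Real.rpow_mul (by norm_num), mul_comm]

lemma SN_eq (hα : 0 < α) (n : ℕ) :
    SN α n = ((2:ℝ) ^ ((n:ℝ) * α) - 1) / (1 - (2:ℝ) ^ (-α)) := by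
  set r := (2:ℝ) ^ α with hr
  have hr1 : 1 < r := by
    rw [hr]
    exact Real.one_lt_rpow_iff_of_pos (by norm_num) |>.2 (Or.inl ⟨by norm_num, hα⟩)
  have hr0 : (0:ℝ) < r := lt_trans one_pos hr1
  have hrn : r ^ n = (2:ℝ) ^ ((n:ℝ) * α) := rpow_pow n
  have hneg : (2:ℝ) ^ (-α) = r⁻¹ := by
    rw [hr, Real.rpow_neg (by norm_num)]
  have hsum : SN α n = r * ((r ^ n - 1) / (r - 1)) := by
    rw [SN, ← hr]
    have : ∀ j : ℕ, r ^ (j+1) = r * r ^ j := fun j => by ring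
    simp only [this, ← Finset.mul_sum]
    rw [geom_sum_eq hr1.ne']
  rw [hsum, ← hrn, hneg]
  have h1 : r - 1 ≠ 0 := sub_ne_zero.2 hr1.ne'
  field_simp

lemma one_le_abs_rpow (hα : 0 < α) (k : NZ1) : 1 ≤ |(k.1 : ℝ)| ^ α := by
  have h1 : (1:ℝ) ≤ |(k.1 : ℝ)| := by
    have := Int.one_le_abs k.2
    calc (1:ℝ) = ((1:ℤ) : ℝ) := by norm_num
      _ ≤ ((|k.1| : ℤ) : ℝ) := by exact_mod_cast this
      _ = |(k.1 : ℝ)| := by push_cast; ring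
  calc (1:ℝ) = 1 ^ α := (Real.one_rpow α).symm
    _ ≤ |(k.1 : ℝ)| ^ α := Real.rpow_le_rpow zero_le_one h1 hα.le

section Ops
variable (U : H1 →L[ℂ] H1)
  (hU : ∀ (k : NZ1) (c : ℂ),
    U (lp.single 2 k c) = lp.single 2 ⟨2 * k.1, mul_ne_zero two_ne_zero k.2⟩ c)
  (G : ℝ → (H1 →L[ℂ] H1))
  (hG : ∀ ε : ℝ, 0 < ε → ∀ (f : H1) (k : NZ1),
    (G ε f : ∀ _ : NZ1, ℂ) k
      = (Real.exp (-(|ε * (k.1 : ℝ)| ^ α)) : ℝ) * (f : ∀ _ : NZ1, ℂ) k)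

include hG in
lemma G_single (hε : 0 < ε) (k : NZ1) (c : ℂ) :
    G ε (lp.single 2 k c)
      = lp.single 2 k ((Real.exp (-(|ε * (k.1 : ℝ)| ^ α)) : ℂ) * c) := by
  refine lp.ext (funext fun m => ?_)
  rw [hG ε hε _ m, single_coe k c m, single_coe]
  by_cases h : m = k
  · subst h; simp
  · simp [h]

include hU in
lemma Upow_single (n : ℕ) (k : NZ1) (c : ℂ) :
    (U ^ n) (lp.single 2 k c) = lp.single 2 (mulp n k) c := by
  induction n with
  | zero =>
    have : mulp 0 k = k := Subtype.ext (by simp [mulp])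
    simp [this]
  | succ n ih =>
    rw [pow_succ', ContinuousLinearMap.mul_apply, ih, hU]
    congr 1
    exact Subtype.ext (by simp [mulp]; ring)

include hU hG in
lemma T_single (hε : 0 < ε) (n : ℕ) (k : NZ1) (c : ℂ) :
    (((G ε).comp U) ^ n) (lp.single 2 k c)
      = lp.single 2 (mulp n k)
          ((Real.exp (-(SN α n * (ε ^ α * |(k.1 : ℝ)| ^ α))) : ℂ) * c) := by
  induction n with
  | zero =>
    have h1 : mulp 0 k = k := Subtype.ext (by simp [mulp])
    simp [h1, SN]
  | succ n ih =>
    rw [pow_succ', ContinuousLinearMap.mul_apply, ih, ContinuousLinearMap.comp_apply, hU,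
      G_single G hG hε]
    have hidx : (⟨2 * (mulp n k).1, mul_ne_zero two_ne_zero (mulp n k).2⟩ : NZ1)
        = mulp (n+1) k := Subtype.ext (by simp [mulp]; ring)
    rw [hidx]
    congr 1
    have hterm : |ε * ((mulp (n+1) k).1 : ℝ)| ^ α
        = ((2:ℝ) ^ α) ^ (n+1) * (ε ^ α * |(k.1 : ℝ)| ^ α) := by
      have := term_eq (α := α) hε (n+1) k.1
      simpa [mulp] using this
    have hexp : ((Real.exp (-(|ε * ((mulp (n+1) k).1 : ℝ)| ^ α)) : ℝ) : ℂ)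
          * ((Real.exp (-(SN α n * (ε ^ α * |(k.1 : ℝ)| ^ α))) : ℝ) : ℂ)
        = ((Real.exp (-(SN α (n+1) * (ε ^ α * |(k.1 : ℝ)| ^ α))) : ℝ) : ℂ) := by
      rw [← Complex.ofReal_mul, ← Real.exp_add]
      congr 2
      rw [hterm]
      have : SN α (n+1) = SN α n + ((2:ℝ) ^ α) ^ (n+1) := by
        rw [SN, SN, Finset.sum_range_succ]
      rw [this]
      ring
    rw [← mul_assoc, hexp]

include hU hG in
lemma A2_single (hε : 0 < ε) (n : ℕ) (k : NZ1) (c : ℂ) :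
    ((G ε).comp ((U ^ n).comp (G ε))) (lp.single 2 k c)
      = lp.single 2 (mulp n k)
          ((Real.exp (-((1 + ((2:ℝ) ^ α) ^ n) * (ε ^ α * |(k.1 : ℝ)| ^ α))) : ℂ) * c) := by
  rw [ContinuousLinearMap.comp_apply, ContinuousLinearMap.comp_apply,
    G_single G hG hε, Upow_single U hU, G_single G hG hε]
  congr 1
  have hterm : |ε * ((mulp n k).1 : ℝ)| ^ α
      = ((2:ℝ) ^ α) ^ n * (ε ^ α * |(k.1 : ℝ)| ^ α) := by
    have := term_eq (α := α) hε n k.1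
    simpa [mulp] using this
  have hterm0 : |ε * (k.1 : ℝ)| ^ α = ε ^ α * |(k.1 : ℝ)| ^ α := term0_eq hε k.1
  rw [← mul_assoc, ← Complex.ofReal_mul, ← Real.exp_add]
  congr 2
  rw [hterm, hterm0]
  ring

include hU hG in
lemma norm_T (hα : 0 < α) (hε : 0 < ε) (n : ℕ) :
    ‖((G ε).comp U) ^ n‖ = Real.exp (-(SN α n * ε ^ α)) := by
  have hεα : 0 < ε ^ α := Real.rpow_pos_of_pos hε α
  refine opNorm_eq _ (mulp n) (mulp_injective n)
    (fun k => Real.exp (-(SN α n * (ε ^ α * |(k.1 : ℝ)| ^ α))))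
    (Real.exp (-(SN α n * ε ^ α)))
    (fun k => (Real.exp_pos _).le) ?_ ⟨1, one_ne_zero⟩ ?_ (T_single U hU G hG hε n)
  · intro k
    apply Real.exp_le_exp.2
    apply neg_le_neg
    have h1 : ε ^ α * 1 ≤ ε ^ α * |(k.1 : ℝ)| ^ α :=
      mul_le_mul_of_nonneg_left (one_le_abs_rpow hα k) hεα.le
    have := mul_le_mul_of_nonneg_left h1 (SN_nonneg (α := α) n)
    simpa using this
  · norm_num

include hU hG in
lemma norm_A2 (hα : 0 < α) (hε : 0 < ε) (n : ℕ) :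
    ‖(G ε).comp ((U ^ n).comp (G ε))‖
      = Real.exp (-((1 + ((2:ℝ) ^ α) ^ n) * ε ^ α)) := by
  have hεα : 0 < ε ^ α := Real.rpow_pos_of_pos hε α
  have hc0 : (0:ℝ) ≤ 1 + ((2:ℝ) ^ α) ^ n := by positivity
  refine opNorm_eq _ (mulp n) (mulp_injective n)
    (fun k => Real.exp (-((1 + ((2:ℝ) ^ α) ^ n) * (ε ^ α * |(k.1 : ℝ)| ^ α))))
    (Real.exp (-((1 + ((2:ℝ) ^ α) ^ n) * ε ^ α)))
    (fun k => (Real.exp_pos _).le) ?_ ⟨1, one_ne_zero⟩ ?_ (A2_single U hU G hG hε n)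
  · intro k
    apply Real.exp_le_exp.2
    apply neg_le_neg
    have h1 : ε ^ α * 1 ≤ ε ^ α * |(k.1 : ℝ)| ^ α :=
      mul_le_mul_of_nonneg_left (one_le_abs_rpow hα k) hεα.le
    have := mul_le_mul_of_nonneg_left h1 hc0
    simpa using this
  · norm_num

end Ops
end Stmt18Aux

/-- The doubling map `F(x) = 2x mod 1` on 𝕋¹ with α-stable noise `ĝ(ξ) = e^{−|ξ|^α}`:
the Koopman operator sends `e_k ↦ e_{2k}` and `G_ε` multiplies the k-th coefficient
by `e^{−|εk|^α}`.  Then `‖T_ε^n‖ = exp(−ε^α (2^{nα} − 1)/(1 − 2^{−α}))` and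
`‖G_ε U^n G_ε‖ = exp(−ε^α (2^{nα} + 1))` for n ≥ 1, and consequently both
dissipation times equal `(1/ln 2) ln(1/ε) + O(1)` as ε → 0⁺. -/
theorem stmt18 (α : ℝ) (hα : 0 < α) (hα2 : α ≤ 2)
    (U : H1 →L[ℂ] H1)
    (hU : ∀ (k : NZ1) (c : ℂ),
      U (lp.single 2 k c) = lp.single 2 ⟨2 * k.1, mul_ne_zero two_ne_zero k.2⟩ c)
    (G : ℝ → (H1 →L[ℂ] H1))
    (hG : ∀ ε : ℝ, 0 < ε → ∀ (f : H1) (k : NZ1),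
      (G ε f : ∀ _ : NZ1, ℂ) k
        = (Real.exp (-(|ε * (k.1 : ℝ)| ^ α)) : ℝ) * (f : ∀ _ : NZ1, ℂ) k) :
    (∀ ε : ℝ, 0 < ε → ∀ n : ℕ, 1 ≤ n →
      ‖((G ε).comp U) ^ n‖ =
        Real.exp (-(ε ^ α * ((2 : ℝ) ^ ((n : ℝ) * α) - 1) / (1 - (2 : ℝ) ^ (-α))))) ∧
    (∀ ε : ℝ, 0 < ε → ∀ n : ℕ, 1 ≤ n →
      ‖(G ε).comp ((U ^ n).comp (G ε))‖ =
        Real.exp (-(ε ^ α * ((2 : ℝ) ^ ((n : ℝ) * α) + 1)))) ∧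
    ((fun ε : ℝ =>
        ((sInf {n : ℕ | ‖((G ε).comp U) ^ n‖ < Real.exp (-1)} : ℕ) : ℝ)
          - Real.log (1 / ε) / Real.log 2)
      =O[𝓝[>] (0 : ℝ)] fun _ : ℝ => (1 : ℝ)) ∧
    ((fun ε : ℝ =>
        ((sInf {n : ℕ | ‖(G ε).comp ((U ^ n).comp (G ε))‖ < Real.exp (-1)} : ℕ) : ℝ)
          - Real.log (1 / ε) / Real.log 2)
      =O[𝓝[>] (0 : ℝ)] fun _ : ℝ => (1 : ℝ)) := by
  have h2a : (2:ℝ) ^ (-α) < 1 :=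
    Real.rpow_lt_one_of_one_lt_of_neg (by norm_num) (neg_lt_zero.2 hα)
  have h2b : (0:ℝ) < (2:ℝ) ^ (-α) := Real.rpow_pos_of_pos (by norm_num) _
  set d : ℝ := 1 - (2:ℝ) ^ (-α) with hd
  have hd0 : 0 < d := by simp only [hd]; linarith
  have hd1 : d < 1 := by simp only [hd]; linarith
  have key1 : ∀ ε : ℝ, 0 < ε → ∀ n : ℕ,
      ‖((G ε).comp U) ^ n‖ =
        Real.exp (-(ε ^ α * ((2 : ℝ) ^ ((n : ℝ) * α) - 1) / (1 - (2 : ℝ) ^ (-α)))) := by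
    intro ε hε n
    rw [Stmt18Aux.norm_T U hU G hG hα hε n]
    congr 1
    rw [Stmt18Aux.SN_eq hα n]
    ring
  have key2 : ∀ ε : ℝ, 0 < ε → ∀ n : ℕ,
      ‖(G ε).comp ((U ^ n).comp (G ε))‖ =
        Real.exp (-(ε ^ α * ((2 : ℝ) ^ ((n : ℝ) * α) + 1))) := by
    intro ε hε n
    rw [Stmt18Aux.norm_A2 U hU G hG hα hε n]
    congr 1
    rw [Stmt18Aux.rpow_pow]
    ring
  refine ⟨fun ε hε n _ => key1 ε hε n, fun ε hε n _ => key2 ε hε n, ?_, ?_⟩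
  · -- dissipation time for T
    rw [isBigO_iff]
    refine ⟨1 + (|Real.log d| + Real.log 2) / (α * Real.log 2), ?_⟩
    filter_upwards [Ioo_mem_nhdsGT_of_mem (Set.left_mem_Ico.2 one_pos)] with ε hεm
    obtain ⟨hε, hε1⟩ := hεm
    have hεα : 0 < ε ^ α := Real.rpow_pos_of_pos hε α
    have hεα1 : ε ^ α < 1 := Real.rpow_lt_one hε.le hε1 hα
    have hy0 : (0:ℝ) < ε ^ α + d := by linarith
    have hchar : ∀ n : ℕ,
        n ∈ {n : ℕ | ‖((G ε).comp U) ^ n‖ < Real.exp (-1)}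
          ↔ (ε ^ α + d) / ε ^ α < (2:ℝ) ^ ((n:ℝ) * α) := by
      intro n
      simp only [Set.mem_setOf_eq, key1 ε hε n, Real.exp_lt_exp, neg_lt_neg_iff]
      rw [div_lt_iff₀ hεα, lt_div_iff₀ hd0]
      constructor
      · intro h; nlinarith
      · intro h; nlinarith
    have hyb : |Real.log (ε ^ α + d)| ≤ |Real.log d| + Real.log 2 := by
      have hl2 : (0:ℝ) ≤ Real.log 2 := (Real.log_pos (by norm_num)).le
      have hx1 : Real.log d ≤ Real.log (ε ^ α + d) :=
        Real.log_le_log hd0 (by linarith)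
      have hx2 : Real.log (ε ^ α + d) ≤ Real.log 2 :=
        Real.log_le_log hy0 (by linarith)
      rw [abs_le]
      constructor
      · have := neg_abs_le (Real.log d); linarith
      · have := abs_nonneg (Real.log d); linarith
    have := Stmt18Aux.tau_diff_bound hα hε hy0 (by linarith) hchar hyb
    simp only [Real.norm_eq_abs, norm_one, mul_one]
    exact this
  · -- dissipation time for G U^n G
    rw [isBigO_iff]
    refine ⟨1 + Real.log 2 / (α * Real.log 2), ?_⟩
    have hδ : (0:ℝ) < ((1:ℝ)/2) ^ ((1:ℝ)/α) := Real.rpow_pos_of_pos (by norm_num) _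
    filter_upwards [Ioo_mem_nhdsGT_of_mem (Set.left_mem_Ico.2 hδ)] with ε hεm
    obtain ⟨hε, hεδ⟩ := hεm
    have hεα : 0 < ε ^ α := Real.rpow_pos_of_pos hε α
    have hεα2 : ε ^ α < 1/2 := by
      have h := Real.rpow_lt_rpow hε.le hεδ hα
      rwa [← Real.rpow_mul (by norm_num : (0:ℝ) ≤ 1/2),
        one_div_mul_cancel hα.ne', Real.rpow_one] at h
    have hy0 : (0:ℝ) < 1 - ε ^ α := by linarith
    have hchar : ∀ n : ℕ,
        n ∈ {n : ℕ | ‖(G ε).comp ((U ^ n).comp (G ε))‖ < Real.exp (-1)}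
          ↔ (1 - ε ^ α) / ε ^ α < (2:ℝ) ^ ((n:ℝ) * α) := by
      intro n
      simp only [Set.mem_setOf_eq, key2 ε hε n, Real.exp_lt_exp, neg_lt_neg_iff]
      rw [div_lt_iff₀ hεα]
      constructor
      · intro h; nlinarith
      · intro h; nlinarith
    have hyb : |Real.log (1 - ε ^ α)| ≤ Real.log 2 := by
      have hx2 : Real.log (1 - ε ^ α) ≤ 0 := Real.log_nonpos hy0.le (by linarith)
      have hx1 : -Real.log 2 ≤ Real.log (1 - ε ^ α) := by
        have h12 : Real.log ((1:ℝ)/2) ≤ Real.log (1 - ε ^ α) :=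
          Real.log_le_log (by norm_num) (by linarith)
        rwa [one_div, Real.log_inv] at h12
      rw [abs_le]
      exact ⟨hx1, le_trans hx2 (Real.log_pos (by norm_num)).le⟩
    have := Stmt18Aux.tau_diff_bound hα hε hy0 (by linarith) hchar hyb
    simp only [Real.norm_eq_abs, norm_one, mul_one]
    exact this
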